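/- For the Tait-type equation of state with B = K_r v_r^ν > 0, ν ≥ 1, and Φ as above, the fundamental derivative 𝒢 = -(v/2)·F_{vvv}/F_{vv} satisfies 𝒢 = ((ν+1)/2)·(ν K_r v_r^ν)/(γ P v^ν) where γ = (v/P)F_{vv} and P = -F_v; in particular, whenever P > 0, C > 0 and v > 0, we have 𝒢 > 0. -/

import Mathlib

open Real

/-- for the Tait-type EOS with `B = K_r v_r^ν`, the fundamental derivative
satisfies `𝒢 = ((ν+1)/2) ν K_r v_r^ν / (γ P v^ν)` and is positive whenever `P > 0`. -/
theorem tait_fundamental_derivative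
    (A C D Kr vr sr θr er ν : ℝ) (hKr : 0 < Kr) (hC : 0 < C) (hν : 1 ≤ ν) (hvr : 0 < vr)
    (Φ : ℝ → ℝ)
    (hΦ : (ν = 1 ∧ ∀ v : ℝ, 0 < v → Φ v = Real.log (vr / v)) ∨
          (1 < ν ∧ ∀ v : ℝ, 0 < v →
            Φ v = (1 / (1 - ν)) * (vr ^ (1 - ν) - v ^ (1 - ν))))
    (F : ℝ → ℝ → ℝ)
    (hF : ∀ s v : ℝ, F s v = A * (v - vr) + (Kr * vr ^ ν) * Φ v
        + (1 / (2 * C)) * ((s - sr) - D * (v - vr)) ^ 2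
        + θr * ((s - sr) - D * (v - vr) + C * θr) + er) :
    ∀ s v : ℝ, 0 < v →
      let P := -(deriv (fun x => F s x) v)
      let Fvv := deriv (fun x => deriv (fun y => F s y) x) v
      let Fvvv := deriv (fun x => deriv (fun y => deriv (fun z => F s z) y) x) v
      let γ := v / P * Fvv
      let 𝒢 := -(v / 2) * (Fvvv / Fvv)
      0 < P →
        𝒢 = (ν + 1) / 2 * (ν * Kr * vr ^ ν) / (γ * P * v ^ ν) ∧ 0 < 𝒢 := by
  intro s v hv
  dsimp only
  intro hP
  have hν0 : (0:ℝ) < ν := lt_of_lt_of_le one_pos hν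
  have hB0 : 0 < Kr * vr ^ ν := mul_pos hKr (Real.rpow_pos_of_pos hvr ν)
  -- first derivative of Φ
  have hΦd : ∀ x : ℝ, 0 < x → HasDerivAt Φ (-(x ^ (-ν))) x := by
    intro x hx
    rcases hΦ with ⟨hν1, hΦf⟩ | ⟨hν1, hΦf⟩
    · have hR : HasDerivAt (fun y : ℝ => Real.log vr - Real.log y) (-(x ^ (-ν))) x := by
        have h := (Real.hasDerivAt_log hx.ne').const_sub (Real.log vr)
        have he : -(x ^ (-ν)) = -x⁻¹ := by rw [hν1, Real.rpow_neg_one]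
        rw [he]; exact h
      refine hR.congr_of_eventuallyEq ?_
      filter_upwards [Ioi_mem_nhds hx] with y hy
      rw [hΦf y hy, Real.log_div hvr.ne' (ne_of_gt hy)]
    · have hne : (1:ℝ) - ν ≠ 0 := by intro h; nlinarith
      have hR : HasDerivAt (fun y : ℝ => (1 / (1 - ν)) * (vr ^ (1-ν) - y ^ (1-ν)))
          (-(x ^ (-ν))) x := by
        have h := ((Real.hasDerivAt_rpow_const (p := 1-ν) (Or.inl hx.ne')).const_sub
          (vr ^ (1-ν))).const_mul (1 / (1-ν))
        have he : (1:ℝ) - ν - 1 = -ν := by ring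
        rw [he] at h
        have he2 : -(x ^ (-ν)) = 1 / (1-ν) * -((1-ν) * x ^ (-ν)) := by field_simp
        rw [he2]; exact h
      refine hR.congr_of_eventuallyEq ?_
      filter_upwards [Ioi_mem_nhds hx] with y hy
      exact hΦf y hy
  -- first derivative of F s
  have hd1 : ∀ x : ℝ, 0 < x → HasDerivAt (fun y => F s y)
      (A - (Kr * vr ^ ν) * x ^ (-ν) - (1 / C) * D * ((s - sr) - D * (x - vr)) - θr * D) x := by
    intro x hx
    have hFs : (fun y => F s y) = (fun y => A * (y - vr) + (Kr * vr ^ ν) * Φ y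
        + (1 / (2 * C)) * ((s - sr) - D * (y - vr)) ^ 2
        + θr * ((s - sr) - D * (y - vr) + C * θr) + er) := funext fun y => hF s y
    rw [hFs]
    have hu : HasDerivAt (fun y : ℝ => (s - sr) - D * (y - vr)) (-(D * 1)) x :=
      (((hasDerivAt_id x).sub_const vr).const_mul D).const_sub (s - sr)
    have h1 : HasDerivAt (fun y : ℝ => A * (y - vr)) (A * 1) x :=
      ((hasDerivAt_id x).sub_const vr).const_mul A
    have h := (((h1.add ((hΦd x hx).const_mul (Kr * vr ^ ν))).add
        ((hu.pow 2).const_mul (1 / (2 * C)))).add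
        ((hu.add_const (C * θr)).const_mul θr)).add_const er
    refine h.congr_deriv ?_
    field_simp
    ring
  -- second derivative
  have hd2 : ∀ x : ℝ, 0 < x → HasDerivAt
      (fun y : ℝ => A - (Kr * vr ^ ν) * y ^ (-ν) - (1 / C) * D * ((s - sr) - D * (y - vr)) - θr * D)
      ((Kr * vr ^ ν) * ν * x ^ (-ν - 1) + D ^ 2 / C) x := by
    intro x hx
    have hr := Real.hasDerivAt_rpow_const (p := -ν) (Or.inl hx.ne')
    have hu : HasDerivAt (fun y : ℝ => (1 / C) * D * ((s - sr) - D * (y - vr)))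
        ((1 / C) * D * -(D * 1)) x :=
      ((((hasDerivAt_id x).sub_const vr).const_mul D).const_sub (s - sr)).const_mul ((1 / C) * D)
    have h := (((hr.const_mul (Kr * vr ^ ν)).const_sub A).sub hu).sub_const (θr * D)
    refine h.congr_deriv ?_
    field_simp
    ring
  -- third derivative
  have hd3 : ∀ x : ℝ, 0 < x → HasDerivAt
      (fun y : ℝ => (Kr * vr ^ ν) * ν * y ^ (-ν - 1) + D ^ 2 / C)
      (-((Kr * vr ^ ν) * ν * (ν + 1) * x ^ (-ν - 2))) x := by
    intro x hx
    have hr := Real.hasDerivAt_rpow_const (p := -ν - 1) (Or.inl hx.ne')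
    have h := (hr.const_mul ((Kr * vr ^ ν) * ν)).add_const (D ^ 2 / C)
    have he : -ν - 1 - 1 = -ν - 2 := by ring
    rw [he] at h
    refine h.congr_deriv ?_
    ring
  -- second derivative value function
  have hsec : ∀ x : ℝ, 0 < x → deriv (fun x => deriv (fun y => F s y) x) x
      = (Kr * vr ^ ν) * ν * x ^ (-ν - 1) + D ^ 2 / C := by
    intro x hx
    have hev : (fun x => deriv (fun y => F s y) x) =ᶠ[nhds x]
        (fun y : ℝ => A - (Kr * vr ^ ν) * y ^ (-ν) - (1 / C) * D * ((s - sr) - D * (y - vr)) - θr * D) := by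
      filter_upwards [Ioi_mem_nhds hx] with z hz
      exact (hd1 z hz).deriv
    rw [hev.deriv_eq, (hd2 x hx).deriv]
  have hFvv : deriv (fun x => deriv (fun y => F s y) x) v
      = (Kr * vr ^ ν) * ν * v ^ (-ν - 1) + D ^ 2 / C := hsec v hv
  have hFvvv : deriv (fun x => deriv (fun y => deriv (fun z => F s z) y) x) v
      = -((Kr * vr ^ ν) * ν * (ν + 1) * v ^ (-ν - 2)) := by
    have hev : (fun x => deriv (fun y => deriv (fun z => F s z) y) x) =ᶠ[nhds v]
        (fun y : ℝ => (Kr * vr ^ ν) * ν * y ^ (-ν - 1) + D ^ 2 / C) := by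
      filter_upwards [Ioi_mem_nhds hv] with z hz
      exact hsec z hz
    rw [hev.deriv_eq, (hd3 v hv).deriv]
  rw [hFvv, hFvvv]
  have hFvvpos : 0 < (Kr * vr ^ ν) * ν * v ^ (-ν - 1) + D ^ 2 / C :=
    add_pos_of_pos_of_nonneg (mul_pos (mul_pos hB0 hν0) (Real.rpow_pos_of_pos hv _))
      (div_nonneg (sq_nonneg D) hC.le)
  have hPne : -(deriv (fun x => F s x) v) ≠ 0 := ne_of_gt hP
  have hvν : (0:ℝ) < v ^ ν := Real.rpow_pos_of_pos hv ν
  have e1 : v ^ (-ν - 1) = (v ^ ν * v)⁻¹ := by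
    rw [show -ν - 1 = -ν + -1 by ring, Real.rpow_add hv, Real.rpow_neg_one,
      Real.rpow_neg hv.le, mul_inv]
  have e2 : v ^ (-ν - 2) = (v ^ ν * v * v)⁻¹ := by
    rw [show -ν - 2 = -ν + -1 + -1 by ring, Real.rpow_add hv, Real.rpow_add hv,
      Real.rpow_neg_one, Real.rpow_neg hv.le, mul_inv, mul_inv]
  obtain ⟨W, hWdef⟩ : ∃ W : ℝ, Kr * vr ^ ν * ν * v ^ (-ν - 1) + D ^ 2 / C = W := ⟨_, rfl⟩
  rw [hWdef] at hFvvpos ⊢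
  have hWne : W ≠ 0 := ne_of_gt hFvvpos
  have hdne : deriv (fun x => F s x) v ≠ 0 := by
    intro h; rw [h] at hP; simp at hP
  constructor
  · rw [e2]
    field_simp
  · rw [neg_div, neg_mul_neg]
    exact mul_pos (by positivity)
      (div_pos (mul_pos (mul_pos (mul_pos hB0 hν0) (by linarith : (0:ℝ) < ν + 1)) (Real.rpow_pos_of_pos hv _)) hFvvpos)
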